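/- For any Epstein relation R, if R validates every substitution instance of α := p → (q ↪ p), then R ⊨ p ↪ p (i.e. (p,p) ∈ R). -/
import Mathlib


/-- Epstein formulas: letters, ¬, ∨, ∧, →, ↔, △ (tri), ↪ (hook). -/
inductive EFor : Type
  | var : ℕ → EFor
  | neg : EFor → EFor
  | or : EFor → EFor → EFor
  | and : EFor → EFor → EFor
  | imp : EFor → EFor → EFor
  | iff : EFor → EFor → EFor
  | tri : EFor → EFor → EFor
  | hook : EFor → EFor → EFor
  deriving DecidableEq

/-- An Epstein model: a valuation of letters and a binary relation on formulas. -/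
structure EModel : Type where
  v : ℕ → Prop
  R : Set (EFor × EFor)

/-- Epstein satisfaction. -/
def sat (M : EModel) : EFor → Prop
  | .var n => M.v n
  | .neg φ => ¬ sat M φ
  | .or φ ψ => sat M φ ∨ sat M ψ
  | .and φ ψ => sat M φ ∧ sat M ψ
  | .imp φ ψ => sat M φ → sat M ψ
  | .iff φ ψ => (sat M φ ↔ sat M ψ)
  | .tri φ ψ => (sat M φ ∧ sat M ψ) ∧ (φ, ψ) ∈ M.R
  | .hook φ ψ => (sat M φ → sat M ψ) ∧ (φ, ψ) ∈ M.R

/-- The Omega set of a model. -/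
def Omega (M : EModel) : Set (EFor × EFor) :=
  {p | ¬ sat M (.imp p.1 p.2)}

/-- The S-set of a model. -/
def Sset (M : EModel) : Set EModel :=
  {N | N.v = M.v ∧ M.R \ Omega M ⊆ N.R ∧ N.R ⊆ M.R ∪ Omega M}

/-- The theory of a model. -/
def Th (M : EModel) : Set EFor := {φ | sat M φ}

/-- Substitution: extend a map on letters homomorphically. -/
def esubst (σ : ℕ → EFor) : EFor → EFor
  | .var n => σ n
  | .neg φ => .neg (esubst σ φ)
  | .or φ ψ => .or (esubst σ φ) (esubst σ ψ)
  | .and φ ψ => .and (esubst σ φ) (esubst σ ψ)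
  | .imp φ ψ => .imp (esubst σ φ) (esubst σ ψ)
  | .iff φ ψ => .iff (esubst σ φ) (esubst σ ψ)
  | .tri φ ψ => .tri (esubst σ φ) (esubst σ ψ)
  | .hook φ ψ => .hook (esubst σ φ) (esubst σ ψ)

/-- A boolean homomorphism: any assignment respecting the boolean connectives
(no constraint on △, ↪, which are treated as atoms). -/
def BoolHom (w : EFor → Prop) : Prop :=
  (∀ φ, w (.neg φ) ↔ ¬ w φ) ∧
  (∀ φ ψ, w (.or φ ψ) ↔ (w φ ∨ w ψ)) ∧
  (∀ φ ψ, w (.and φ ψ) ↔ (w φ ∧ w ψ)) ∧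
  (∀ φ ψ, w (.imp φ ψ) ↔ (w φ → w ψ)) ∧
  (∀ φ ψ, w (.iff φ ψ) ↔ (w φ ↔ w ψ))

/-- Classical tautologies in the language of Epstein logic. -/
def Taut (φ : EFor) : Prop := ∀ w, BoolHom w → w φ

/-- The logic FΛ: least set containing CPL, the two Epstein axioms and Λ,
closed under uniform substitution and modus ponens. -/
inductive FLam (Λ : Set EFor) : EFor → Prop
  | taut {φ} : Taut φ → FLam Λ φ
  | ax1 : FLam Λ (.imp (.hook (.var 0) (.var 1)) (.imp (.var 0) (.var 1)))
  | ax2 : FLam Λ (.iff (.tri (.var 0) (.var 1))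
      (.and (.hook (.var 0) (.var 1)) (.and (.var 0) (.var 1))))
  | extra {φ} : φ ∈ Λ → FLam Λ φ
  | subst {φ} (σ : ℕ → EFor) : FLam Λ φ → FLam Λ (esubst σ φ)
  | mp {φ ψ} : FLam Λ (.imp φ ψ) → FLam Λ φ → FLam Λ ψ

/-- The base logic F. -/
def Fmem : EFor → Prop := FLam ∅

/-- Hilbert derivability from premises Γ over a logic L. -/
inductive Deriv (L : EFor → Prop) (Γ : Set EFor) : EFor → Prop
  | thm {φ} : L φ → Deriv L Γ φ
  | prem {φ} : φ ∈ Γ → Deriv L Γ φ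
  | mp {φ ψ} : Deriv L Γ (.imp φ ψ) → Deriv L Γ φ → Deriv L Γ ψ

/-- Validity on a relation: true in all models built over it. -/
def relSat (R : Set (EFor × EFor)) (φ : EFor) : Prop :=
  ∀ v : ℕ → Prop, sat ⟨v, R⟩ φ

def etop : EFor := .or (.var 0) (.neg (.var 0))
def ebot : EFor := .neg etop

/-- α := p → (q ↪ p). -/
def alphaF : EFor := .imp (.var 0) (.hook (.var 1) (.var 0))

/-- if R validates all substitution instances of α then R ⊨ p ↪ p. -/
theorem stmt10 (R : Set (EFor × EFor))
    (h : ∀ σ : ℕ → EFor, relSat R (esubst σ alphaF)) :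
    relSat R (.hook (.var 0) (.var 0)) := by
  have hR : ((EFor.var 0, EFor.var 0)) ∈ R := by
    have := h (fun _ => .var 0) (fun _ => True)
    simp [esubst, alphaF, sat] at this
    exact this
  intro v
  exact ⟨id, hR⟩
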